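/- Let Ω be a field and E a subfield of Ω. Let ℒ be the language of rings augmented by one unary predicate symbol, and regard Ω as an ℒ-structure in which the predicate is interpreted as E. Then for every subset A ⊆ Ω, the definable closure D = dcl_ℒ(A) is a subfield of Ω that is linearly disjoint from E over D ∩ E. -/

import Mathlib

/-!
STATEMENT 7: Let `Ω` be a field and `E` a subfield, and regard `Ω` as a structure for the
language of rings augmented by a unary predicate interpreted as `E`. Then for every
`A ⊆ Ω`, the definable closure `D = dcl_L(A)` is a subfield of `Ω` that is linearly
disjoint from `E` over `D ∩ E`.
-/

open FirstOrder FirstOrder.Ring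

/-- `v` is linearly independent over the subset `S` of `Ω`. -/
def LinIndepOver (Ω : Type*) [Field Ω] (S : Set Ω) {n : ℕ} (v : Fin n → Ω) : Prop :=
  ∀ c : Fin n → Ω, (∀ i, c i ∈ S) → (∑ i, c i * v i) = 0 → ∀ i, c i = 0

/-- `F` is linearly disjoint from `L` over `K` inside the ambient field `Ω`. -/
def LinDisjOver (Ω : Type*) [Field Ω] (K F L : Set Ω) : Prop :=
  ∀ (n : ℕ) (v : Fin n → Ω), (∀ i, v i ∈ F) →
    LinIndepOver Ω K v → LinIndepOver Ω L v

/-- The definable closure of `A` in the `L`-structure `M`: the set of `b` that are the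
unique solution of some `L`-formula with parameters from `A`. -/
def dcl (L : Language) (M : Type*) [L.Structure M] (A : Set M) : Set M :=
  {b | ∃ ψ : L.Formula (↥A ⊕ Fin 1),
    ψ.Realize (Sum.elim Subtype.val fun _ => b) ∧
    ∀ b' : M, ψ.Realize (Sum.elim Subtype.val fun _ => b') → b' = b}

/-- The language with a single unary predicate symbol and no function symbols. -/
def unaryPredLang : Language :=
  ⟨fun _ => Empty, fun n => match n with | 1 => PUnit | _ => Empty⟩

/-- The `unaryPredLang`-structure on `Ω` in which the predicate is interpreted as `E`. -/
def predStructure (Ω : Type*) (E : Set Ω) : unaryPredLang.Structure Ω where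
  funMap := fun f => f.elim
  RelMap := fun {n} r v =>
    match n, r, v with
    | 1, _, v => v 0 ∈ E

/-- The language of rings augmented by one unary predicate symbol. -/
def ringPredLang : Language := Language.ring.sum unaryPredLang

/-- The `ringPredLang`-structure on `Ω` in which the ring symbols are interpreted by the
field operations and the predicate is interpreted as `E`. -/
def ringPredStructure (Ω : Type*) [Language.ring.Structure Ω] (E : Set Ω) :
    ringPredLang.Structure Ω :=
  @Language.sumStructure _ _ _ _ (predStructure Ω E)

/-! ### Auxiliary lemmas -/

open FirstOrder.Language in
/-- Realizing a finite conjunction, at the level of `Formula`. -/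
lemma realize_iInf_univ {L : Language} {M : Type*} [L.Structure M] {α β : Type*} [Fintype β]
    (f : β → L.Formula α) (v : α → M) :
    Formula.Realize (L := L) (BoundedFormula.iInf f) v ↔
      ∀ b, Formula.Realize (f b) v :=
  Iff.trans BoundedFormula.realize_iInf (by simp [Formula.Realize])

open FirstOrder.Language in
/-- If `c` is the unique solution (given parameters from `dcl L M A`) of a formula,
then `c ∈ dcl L M A`. -/
lemma mem_dcl_of_unique {L : Language} {M : Type*} [L.Structure M] {A : Set M}
    {n : ℕ} {v : Fin n → M} (hv : ∀ j, v j ∈ dcl L M A)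
    (θ : L.Formula (Fin (n + 1))) {c : M}
    (hc : θ.Realize (Fin.snoc v c))
    (hu : ∀ c' : M, θ.Realize (Fin.snoc v c') → c' = c) :
    c ∈ dcl L M A := by
  classical
  choose ψ hψ hψu using hv
  let g : Fin n → (↥A ⊕ Fin 1) → ((↥A ⊕ Fin 1) ⊕ Fin n) := fun j =>
    Sum.elim (fun a => Sum.inl (Sum.inl a)) fun _ => Sum.inr j
  let h : Fin (n + 1) → ((↥A ⊕ Fin 1) ⊕ Fin n) :=
    Fin.snoc (fun j => Sum.inr j) (Sum.inl (Sum.inr 0))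
  let Φ : L.Formula ((↥A ⊕ Fin 1) ⊕ Fin n) :=
    (BoundedFormula.iInf fun j => (ψ j).relabel (g j)) ⊓ θ.relabel h
  have key : ∀ (b : M) (w : Fin n → M),
      Φ.Realize (Sum.elim (Sum.elim Subtype.val fun _ => b) w) ↔
        ((∀ j, (ψ j).Realize (Sum.elim Subtype.val fun _ => w j)) ∧
          θ.Realize (Fin.snoc w b)) := by
    intro b w
    have h1 : ∀ j : Fin n,
        (Sum.elim (Sum.elim Subtype.val fun _ => b) w) ∘ (g j) =
          Sum.elim Subtype.val (fun _ => w j) := by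
      intro j; funext x; rcases x with a | i <;> simp [g]
    have h2 : (Sum.elim (Sum.elim Subtype.val fun _ => b) w) ∘ h = Fin.snoc w b := by
      funext i
      refine Fin.lastCases ?_ (fun i => ?_) i <;> simp [h]
    rw [show Φ.Realize (Sum.elim (Sum.elim Subtype.val fun _ => b) w) =
      Formula.Realize ((BoundedFormula.iInf fun j => (ψ j).relabel (g j) :
          L.Formula _) ⊓
        θ.relabel h) (Sum.elim (Sum.elim Subtype.val fun _ => b) w) from rfl,
      Formula.realize_inf, Formula.realize_relabel, h2]
    refine and_congr ?_ Iff.rfl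
    rw [realize_iInf_univ]
    refine forall_congr' fun j => ?_
    rw [Formula.realize_relabel, h1 j]
  refine ⟨Φ.iExs (Fin n), ?_, ?_⟩
  · rw [Formula.realize_iExs]
    exact ⟨v, (key c v).2 ⟨hψ, hc⟩⟩
  · intro b' hb'
    rw [Formula.realize_iExs] at hb'
    obtain ⟨w, hw⟩ := hb'
    obtain ⟨hw1, hw2⟩ := (key b' w).1 hw
    have hwv : w = v := funext fun j => hψu j _ (hw1 j)
    rw [hwv] at hw2
    exact hu b' hw2

/-- The sum of a finite family of terms in the language of rings. -/
def sumTerm {α : Type*} : ∀ {n : ℕ}, (Fin n → Language.ring.Term α) → Language.ring.Term α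
  | 0, _ => 0
  | _ + 1, t => sumTerm (fun i => t i.castSucc) + t (Fin.last _)

lemma realize_sumTerm {R : Type*} [Field R] [CompatibleRing R] {α : Type*} :
    ∀ {n : ℕ} (t : Fin n → Language.ring.Term α) (x : α → R),
      (sumTerm t).realize x = ∑ i, (t i).realize x
  | 0, t, x => by simp [sumTerm, realize_zero]
  | n + 1, t, x => by
    rw [Fin.sum_univ_castSucc, sumTerm, realize_add,
      realize_sumTerm (fun i => t i.castSucc) x]

/-- The atomic formula `t₁ = t₂` of `ringPredLang`, for ring terms `t₁ t₂`. -/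
def rEq {α : Type*} (t₁ t₂ : Language.ring.Term α) : ringPredLang.Formula α :=
  Language.LHom.sumInl.onFormula (t₁.equal t₂)

/-- The atomic formula `t ∈ E` of `ringPredLang`, for a ring term `t`. -/
def inE {α : Type*} (t : Language.ring.Term α) : ringPredLang.Formula α :=
  Language.Relations.formula₁ (Sum.inr PUnit.unit) (Language.LHom.sumInl.onTerm t)

theorem dcl_pair_isSubfield_linearlyDisjoint
    (Ω : Type*) [Field Ω] [CompatibleRing Ω] (E : Subfield Ω) (A : Set Ω) :
    ∃ D : Subfield Ω,
      (D : Set Ω) = @dcl ringPredLang Ω (ringPredStructure Ω (E : Set Ω)) A ∧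
      LinDisjOver Ω ((D : Set Ω) ∩ (E : Set Ω)) (D : Set Ω) (E : Set Ω) := by
  classical
  letI instP : unaryPredLang.Structure Ω := predStructure Ω (E : Set Ω)
  letI instR : ringPredLang.Structure Ω := ringPredStructure Ω (E : Set Ω)
  haveI hexp : (Language.LHom.sumInl : Language.ring →ᴸ ringPredLang).IsExpansionOn Ω :=
    ⟨fun _ _ => rfl, fun _ _ => rfl⟩
  set S : Set Ω := dcl ringPredLang Ω A with hSdef
  -- realization of the auxiliary formulas
  have hrEq : ∀ {α : Type} (t₁ t₂ : Language.ring.Term α) (x : α → Ω),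
      (rEq t₁ t₂).Realize x ↔ t₁.realize x = t₂.realize x := by
    intro α t₁ t₂ x
    rw [rEq]
    exact (Language.LHom.realize_onFormula (M := Ω)
      (Language.LHom.sumInl : Language.ring →ᴸ ringPredLang) _).trans Language.Formula.realize_equal
  have hinE : ∀ {α : Type} (t : Language.ring.Term α) (x : α → Ω),
      (inE t).Realize x ↔ t.realize x ∈ (E : Set Ω) := by
    intro α t x
    rw [inE]
    refine Language.Formula.realize_rel₁.trans ?_
    have : @Language.Structure.RelMap ringPredLang Ω instR 1 (Sum.inr PUnit.unit)
          ![((Language.LHom.sumInl : Language.ring →ᴸ ringPredLang).onTerm t).realize x] ↔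
        ((Language.LHom.sumInl : Language.ring →ᴸ ringPredLang).onTerm t).realize x ∈
          (E : Set Ω) := Iff.rfl
    refine this.trans ?_
    rw [Language.LHom.realize_onTerm]
  -- closure of S under term operations
  have htermS : ∀ {k : ℕ} (t : Language.ring.Term (Fin k)) (w : Fin k → Ω),
      (∀ j, w j ∈ S) → t.realize w ∈ S := by
    intro k t w hw
    refine mem_dcl_of_unique hw
      (rEq (Language.Term.var (Fin.last k)) (t.relabel Fin.castSucc)) ?_ ?_
    · rw [hrEq]
      simp [Language.Term.realize_relabel, Fin.snoc_comp_castSucc]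
    · intro c' h
      rw [hrEq] at h
      simpa [Language.Term.realize_relabel, Fin.snoc_comp_castSucc] using h
  have h0 : (0 : Ω) ∈ S := by
    have h2 := htermS (0 : Language.ring.Term (Fin 0)) Fin.elim0 (fun j => j.elim0)
    simp only [realize_zero] at h2
    exact h2
  have h1 : (1 : Ω) ∈ S := by
    have h2 := htermS (1 : Language.ring.Term (Fin 0)) Fin.elim0 (fun j => j.elim0)
    simp only [realize_one] at h2
    exact h2
  have hpair : ∀ a b : Ω, a ∈ S → b ∈ S → ∀ j : Fin 2, (![a, b] : Fin 2 → Ω) j ∈ S := by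
    intro a b ha hb j; fin_cases j <;> simpa
  have hsingle : ∀ a : Ω, a ∈ S → ∀ j : Fin 1, (![a] : Fin 1 → Ω) j ∈ S := by
    intro a ha j; fin_cases j; simpa
  have hsnoc1 : ∀ a c : Ω, (Fin.snoc ![a] c : Fin 2 → Ω) = ![a, c] := by
    intro a c; funext j; fin_cases j <;> simp [Fin.snoc]
  have hadd : ∀ a b : Ω, a ∈ S → b ∈ S → a + b ∈ S := by
    intro a b ha hb
    have h2 := htermS
      (Language.Term.var 0 + Language.Term.var 1 : Language.ring.Term (Fin 2)) ![a, b]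
      (hpair a b ha hb)
    simp only [realize_add, Language.Term.realize_var, Matrix.cons_val_zero,
      Matrix.cons_val_one, Matrix.head_cons] at h2
    exact h2
  have hmul : ∀ a b : Ω, a ∈ S → b ∈ S → a * b ∈ S := by
    intro a b ha hb
    have h2 := htermS
      (Language.Term.var 0 * Language.Term.var 1 : Language.ring.Term (Fin 2)) ![a, b]
      (hpair a b ha hb)
    simp only [realize_mul, Language.Term.realize_var, Matrix.cons_val_zero,
      Matrix.cons_val_one, Matrix.head_cons] at h2
    exact h2
  have hneg : ∀ a : Ω, a ∈ S → -a ∈ S := by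
    intro a ha
    have h2 := htermS (-Language.Term.var 0 : Language.ring.Term (Fin 1)) ![a]
      (hsingle a ha)
    simp only [realize_neg, Language.Term.realize_var, Matrix.cons_val_zero] at h2
    exact h2
  have hinv : ∀ a : Ω, a ∈ S → a⁻¹ ∈ S := by
    intro a ha
    have hre : ∀ c : Ω,
        Language.Formula.Realize (L := ringPredLang)
          ((rEq (Language.Term.var 0) 0 ⊓ rEq (Language.Term.var 1) 0) ⊔
            rEq (Language.Term.var 0 * Language.Term.var 1) 1)
          (Fin.snoc ![a] c) ↔ ((a = 0 ∧ c = 0) ∨ a * c = 1) := by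
      intro c
      rw [hsnoc1, Language.Formula.realize_sup, Language.Formula.realize_inf,
        hrEq, hrEq, hrEq]
      simp only [realize_mul, realize_one, realize_zero, Language.Term.realize_var,
        Matrix.cons_val_zero, Matrix.cons_val_one, Matrix.head_cons]
    refine mem_dcl_of_unique (hsingle a ha) _ ((hre _).2 ?_) (fun c' h => ?_)
    · rcases eq_or_ne a 0 with h | h
      · left; exact ⟨h, by simp [h]⟩
      · right; exact mul_inv_cancel₀ h
    · rcases (hre c').1 h with ⟨h1', h2⟩ | h2
      · rw [h2, h1', inv_zero]
      · exact eq_inv_of_mul_eq_one_right h2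
  refine ⟨{ carrier := S, zero_mem' := h0, one_mem' := h1,
            add_mem' := fun ha hb => hadd _ _ ha hb,
            neg_mem' := fun ha => hneg _ ha,
            mul_mem' := fun ha hb => hmul _ _ ha hb,
            inv_mem' := hinv }, rfl, ?_⟩
  intro n v hv hindep
  intro c hcE hcsum
  by_contra hne
  push_neg at hne
  obtain ⟨i0, hi0⟩ := hne
  have hvS : ∀ j, v j ∈ S := hv
  -- choose a nonzero linear dependence over `E` with minimal support
  set P : ℕ → Prop := fun m => ∃ d : Fin n → Ω, (∀ i, d i ∈ (E : Set Ω)) ∧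
      (∑ i, d i * v i) = 0 ∧ (∃ i, d i ≠ 0) ∧
      (Finset.univ.filter fun i => d i ≠ 0).card = m with hPdef
  have hPex : ∃ m, P m := ⟨_, c, hcE, hcsum, ⟨i0, hi0⟩, rfl⟩
  obtain ⟨d, hdE, hdsum, ⟨k, hk⟩, hdcard⟩ := Nat.find_spec hPex
  set s : Finset (Fin n) := Finset.univ.filter fun i => d i ≠ 0 with hs
  have hks : k ∈ s := by simp [hs, hk]
  set d' : Fin n → Ω := fun i => d i / d k with hd'
  have hd'E : ∀ i, d' i ∈ (E : Set Ω) := fun i => div_mem (hdE i) (hdE k)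
  have hd'sum : (∑ i, d' i * v i) = 0 := by
    have heq : (∑ i, d' i * v i) = (∑ i, d i * v i) / d k := by
      rw [Finset.sum_div]
      refine Finset.sum_congr rfl fun i _ => ?_
      rw [hd', div_mul_eq_mul_div]
    rw [heq, hdsum, zero_div]
  have hd'k : d' k = 1 := div_self hk
  have hd'zero : ∀ i, d' i = 0 ↔ d i = 0 := by
    intro i; rw [hd']; simp [div_eq_zero_iff, hk]
  have hd'supp : ∀ i, i ∉ s → d' i = 0 := by
    intro i hi
    rw [hd'zero]
    by_contra hne'
    exact hi (by simp [hs, hne'])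
  -- uniqueness of the normalized minimal dependence
  have huniq : ∀ e : Fin n → Ω, (∀ i, e i ∈ (E : Set Ω)) → (∑ i, e i * v i) = 0 →
      e k = 1 → (∀ i, i ∉ s → e i = 0) → e = d' := by
    intro e heE hesum hek hes
    by_contra hne'
    have hfe : ∃ i, e i - d' i ≠ 0 := by
      by_contra hall
      push_neg at hall
      exact hne' (funext fun i => sub_eq_zero.mp (hall i))
    set f : Fin n → Ω := fun i => e i - d' i with hf
    have hfsub : (Finset.univ.filter fun i => f i ≠ 0) ⊆ s.erase k := by
      intro i hi
      simp only [Finset.mem_filter, Finset.mem_univ, true_and] at hi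
      refine Finset.mem_erase.mpr ⟨?_, ?_⟩
      · rintro rfl
        exact hi (by rw [hf]; simp [hek, hd'k])
      · by_contra his
        exact hi (by rw [hf]; simp [hes i his, hd'supp i his])
    have hcardlt : (Finset.univ.filter fun i => f i ≠ 0).card < Nat.find hPex := by
      calc (Finset.univ.filter fun i => f i ≠ 0).card ≤ (s.erase k).card :=
            Finset.card_le_card hfsub
        _ < s.card := Finset.card_erase_lt_of_mem hks
        _ = Nat.find hPex := hdcard
    refine Nat.find_min hPex hcardlt ⟨f, fun i => sub_mem (heE i) (hd'E i), ?_, hfe, rfl⟩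
    rw [show (∑ i, f i * v i) = (∑ i, e i * v i) - (∑ i, d' i * v i) by
      rw [← Finset.sum_sub_distrib]; exact Finset.sum_congr rfl fun i _ => by rw [hf]; ring]
    rw [hesum, hd'sum, sub_zero]
  -- each coefficient of the normalized dependence is definable, hence in `S ∩ E`
  have hd'S : ∀ i : Fin n, d' i ∈ S := by
    intro i
    let tv : Fin (n + 1) ⊕ Fin n → Language.ring.Term (Fin (n + 1) ⊕ Fin n) :=
      Language.Term.var
    let Θ : ringPredLang.Formula (Fin (n + 1) ⊕ Fin n) :=
      (Language.BoundedFormula.iInf fun j =>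
          if j ∈ s then inE (tv (Sum.inr j)) else rEq (tv (Sum.inr j)) 0) ⊓
        (rEq (tv (Sum.inr k)) 1 ⊓
          (rEq (sumTerm fun j => tv (Sum.inr j) * tv (Sum.inl j.castSucc)) 0 ⊓
            rEq (tv (Sum.inl (Fin.last n))) (tv (Sum.inr i))))
    have keyΘ : ∀ (x : Ω) (w : Fin n → Ω),
        Θ.Realize (Sum.elim (Fin.snoc v x) w) ↔
          ((∀ j, (j ∈ s → w j ∈ (E : Set Ω)) ∧ (j ∉ s → w j = 0)) ∧
            (w k = 1 ∧ ((∑ j, w j * v j) = 0 ∧ x = w i))) := by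
      intro x w
      rw [show Θ.Realize (Sum.elim (Fin.snoc v x) w) =
        Language.Formula.Realize (L := ringPredLang)
          ((Language.BoundedFormula.iInf fun j =>
              if j ∈ s then inE (tv (Sum.inr j)) else rEq (tv (Sum.inr j)) 0) ⊓
            (rEq (tv (Sum.inr k)) 1 ⊓
              (rEq (sumTerm fun j => tv (Sum.inr j) * tv (Sum.inl j.castSucc)) 0 ⊓
                rEq (tv (Sum.inl (Fin.last n))) (tv (Sum.inr i)))))
          (Sum.elim (Fin.snoc v x) w) from rfl]
      rw [Language.Formula.realize_inf, Language.Formula.realize_inf,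
        Language.Formula.realize_inf, realize_iInf_univ, hrEq, hrEq, hrEq]
      have hterm1 : ∀ j : Fin n, (tv (Sum.inr j)).realize (Sum.elim (Fin.snoc v x) w) = w j :=
        fun j => rfl
      have hterm2 : (tv (Sum.inl (Fin.last n))).realize (Sum.elim (Fin.snoc v x) w) = x := by
        show (Fin.snoc v x : Fin (n+1) → Ω) (Fin.last n) = x
        simp
      have hsum' : (sumTerm fun j => tv (Sum.inr j) * tv (Sum.inl j.castSucc)).realize
          (Sum.elim (Fin.snoc v x) w) = ∑ j, w j * v j := by
        rw [realize_sumTerm]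
        refine Finset.sum_congr rfl fun j _ => ?_
        rw [realize_mul]
        show w j * (Fin.snoc v x : Fin (n+1) → Ω) j.castSucc = w j * v j
        rw [Fin.snoc_castSucc]
      rw [hterm2, hsum']
      simp only [hterm1, realize_zero, realize_one]
      refine and_congr ?_ (by tauto)
      refine forall_congr' fun j => ?_
      by_cases hj : j ∈ s
      · rw [if_pos hj, hinE, hterm1 j]
        simp [hj]
      · rw [if_neg hj, hrEq, hterm1 j]
        simp [hj, realize_zero]
    refine mem_dcl_of_unique hvS (Θ.iExs (Fin n)) ?_ ?_
    · rw [Language.Formula.realize_iExs]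
      refine ⟨d', (keyΘ _ d').2 ⟨fun j => ⟨fun _ => hd'E j, fun hj => hd'supp j hj⟩,
        hd'k, hd'sum, rfl⟩⟩
    · intro x hx
      rw [Language.Formula.realize_iExs] at hx
      obtain ⟨w, hw⟩ := hx
      obtain ⟨hw1, hw2, hw3, hw4⟩ := (keyΘ x w).1 hw
      have hwE : ∀ j, w j ∈ (E : Set Ω) := by
        intro j
        by_cases hj : j ∈ s
        · exact (hw1 j).1 hj
        · rw [(hw1 j).2 hj]; exact zero_mem E
      have : w = d' := huniq w hwE hw3 hw2 (fun j hj => (hw1 j).2 hj)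
      rw [hw4, this]
  -- conclude using linear independence over `D ∩ E`
  have := hindep d' (fun i => ⟨hd'S i, hd'E i⟩) hd'sum k
  rw [hd'k] at this
  exact one_ne_zero this
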